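/- Let Ω = (−1,1)³, P = {0} × (−1,1)², and define y : Ω → ℝ³ by y(x₁,x₂,x₃) := (x₁, x₂, |x₁| x₃). Then: y ∈ W^{1,∞}(Ω;ℝ³); det ∇y(x) = |x₁| > 0 for every x ∈ Ω \ P; y restricted to Ω \ P is injective; y(Ω) = V⁺ ∪ S ∪ V⁻ is not open, where V⁺ = {ξ : 0 < ξ₁ < 1, −1 < ξ₂ < 1, |ξ₃| < ξ₁}, S = {0} × (−1,1) × {0}, and V⁻ = {ξ : −1 < ξ₁ < 0, −1 < ξ₂ < 1, |ξ₃| < −ξ₁}; and the deformed configuration Ω^y := y(Ω) \ y(∂Ω) equals V⁺ ∪ V⁻, which is open and disconnected. -/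

import Mathlib

noncomputable section
open MeasureTheory Set Filter Topology

/-- We model `ℝ³` as `Fin 3 → ℝ` (with Lebesgue measure `volume`). -/
abbrev V3 := Fin 3 → ℝ
/-- 3×3 real matrices. -/
abbrev M3 := Matrix (Fin 3) (Fin 3) ℝ

/-- Euclidean norm of a vector in `ℝ³`. -/
def vnorm (v : V3) : ℝ := Real.sqrt (∑ i, (v i) ^ 2)

/-- Frobenius norm of a matrix. -/
def mnorm (A : M3) : ℝ := Real.sqrt (∑ i, ∑ j, (A i j) ^ 2)

/-- The (a.e.-defined) gradient matrix of `y : ℝ³ → ℝ³`, `(∇y)_{ij} = ∂_j y_i`. -/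
def gradM (y : V3 → V3) (x : V3) : M3 := Matrix.of fun i j => fderiv ℝ y x (Pi.single j 1) i

/-- Jacobian determinant `det ∇y`. -/
def detG (y : V3 → V3) (x : V3) : ℝ := (gradM y x).det

/-- Cofactor matrix `cof A` (transpose of the adjugate). -/
def cofM (A : M3) : M3 := Matrix.transpose (Matrix.adjugate A)

/-- `adj A`, the transpose of the cofactor matrix (the classical adjugate). -/
def adjM (A : M3) : M3 := Matrix.adjugate A

/-- Gradient (as a vector) of a scalar function on `ℝ³`. -/
def gradS (φ : V3 → ℝ) (ξ : V3) : V3 := fun j => fderiv ℝ φ ξ (Pi.single j 1)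

/-- Divergence of a vector field on `ℝ³`. -/
def divV (ψ : V3 → V3) (ξ : V3) : ℝ := ∑ i, fderiv ℝ ψ ξ (Pi.single i 1) i

/-- The deformed configuration `Ω^y := y(Ω) \ y(∂Ω)`. -/
def defConfig (y : V3 → V3) (Ω : Set V3) : Set V3 := y '' Ω \ y '' frontier Ω

/-- `y` is almost everywhere injective on `Ω`: injective off a Lebesgue-null set. -/
def AEInjOn (y : V3 → V3) (Ω : Set V3) : Prop :=
  ∃ X ⊆ Ω, volume X = 0 ∧ Set.InjOn y (Ω \ X)

/-- Membership in `W^{1,p}(Ω;ℝ³)` (`p > 3`), identified with the continuous representative: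
continuity up to the boundary, a.e. differentiability, and `L^p`-integrability of the
gradient. -/
def W1p (y : V3 → V3) (Ω : Set V3) (p : ℝ) : Prop :=
  ContinuousOn y (closure Ω) ∧
  (∀ᵐ x ∂volume.restrict Ω, DifferentiableAt ℝ y x) ∧
  (∫⁻ x in Ω, ENNReal.ofReal (mnorm (gradM y x) ^ p)) < ⊤

/-- Lusin property (N) on a set `s`: null sets are mapped to null sets. -/
def LusinN (y : V3 → V3) (s : Set V3) : Prop :=
  ∀ A ⊆ s, volume A = 0 → volume (y '' A) = 0

/-- The cube `Ω = (−1,1)³`. -/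
def Ω19 : Set V3 := {x | ∀ i, x i ∈ Ioo (-1 : ℝ) 1}

/-- The middle plane `P = {0} × (−1,1)²`. -/
def P19 : Set V3 := {x | x 0 = 0 ∧ x 1 ∈ Ioo (-1 : ℝ) 1 ∧ x 2 ∈ Ioo (-1 : ℝ) 1}

/-- Ball's deformation `y(x) = (x₁, x₂, |x₁| x₃)`. -/
def y19 : V3 → V3 := fun x => ![x 0, x 1, |x 0| * x 2]

def V19plus : Set V3 :=
  {ξ | 0 < ξ 0 ∧ ξ 0 < 1 ∧ -1 < ξ 1 ∧ ξ 1 < 1 ∧ |ξ 2| < ξ 0}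

def S19 : Set V3 := {ξ | ξ 0 = 0 ∧ ξ 1 ∈ Ioo (-1 : ℝ) 1 ∧ ξ 2 = 0}

def V19minus : Set V3 :=
  {ξ | -1 < ξ 0 ∧ ξ 0 < 0 ∧ -1 < ξ 1 ∧ ξ 1 < 1 ∧ |ξ 2| < -ξ 0}

namespace BallAux
open ContinuousLinearMap

lemma hasFD_pos {x : V3} (h : 0 < x 0) :
    HasFDerivAt y19 ((ContinuousLinearMap.pi ![proj 0, proj 1,
      x 0 • proj 2 + x 2 • proj 0] : V3 →L[ℝ] V3)) x := by
  have hopen : IsOpen {z : V3 | 0 < z 0} := isOpen_lt continuous_const (continuous_apply 0)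
  have hev : (fun z : V3 => |z 0| * z 2) =ᶠ[nhds x] (fun z : V3 => z 0 * z 2) := by
    filter_upwards [hopen.mem_nhds h] with z hz
    rw [abs_of_pos hz]
  rw [hasFDerivAt_pi']
  intro i
  fin_cases i
  · convert (hasFDerivAt_apply (0 : Fin 3) x) using 1 <;> rfl
  · convert (hasFDerivAt_apply (1 : Fin 3) x) using 1 <;> rfl
  · have h2 : HasFDerivAt (fun z : V3 => z 0 * z 2)
        ((x 0 • proj 2 + x 2 • proj 0 : V3 →L[ℝ] ℝ)) x := by
      have := (hasFDerivAt_apply (𝕜 := ℝ) (0 : Fin 3) x).mul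
        (hasFDerivAt_apply (𝕜 := ℝ) (2 : Fin 3) x)
      convert this using 1 <;> rfl
    have h3 := h2.congr_of_eventuallyEq hev
    convert h3 using 1 <;> rfl

lemma hasFD_neg {x : V3} (h : x 0 < 0) :
    HasFDerivAt y19 ((ContinuousLinearMap.pi ![proj 0, proj 1,
      (-x 0) • proj 2 + (-x 2) • proj 0] : V3 →L[ℝ] V3)) x := by
  have hopen : IsOpen {z : V3 | z 0 < 0} := isOpen_lt (continuous_apply 0) continuous_const
  have hev : (fun z : V3 => |z 0| * z 2) =ᶠ[nhds x] (fun z : V3 => -(z 0 * z 2)) := by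
    filter_upwards [hopen.mem_nhds h] with z hz
    rw [abs_of_neg hz]; ring
  rw [hasFDerivAt_pi']
  intro i
  fin_cases i
  · convert (hasFDerivAt_apply (0 : Fin 3) x) using 1 <;> rfl
  · convert (hasFDerivAt_apply (1 : Fin 3) x) using 1 <;> rfl
  · have h2 : HasFDerivAt (fun z : V3 => -(z 0 * z 2))
        (((-x 0) • proj 2 + (-x 2) • proj 0 : V3 →L[ℝ] ℝ)) x := by
      have := ((hasFDerivAt_apply (𝕜 := ℝ) (0 : Fin 3) x).mul
        (hasFDerivAt_apply (𝕜 := ℝ) (2 : Fin 3) x)).neg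
      convert this using 1 <;> try rfl
      ext v
      simp
      ring
    have h3 := h2.congr_of_eventuallyEq hev
    convert h3 using 1 <;> rfl

lemma diff_det {x : V3} (hx : x 0 ≠ 0) :
    DifferentiableAt ℝ y19 x ∧ detG y19 x = |x 0| ∧ 0 < detG y19 x := by
  rcases hx.lt_or_gt with h | h
  · have hd := hasFD_neg h
    have hdet : detG y19 x = -x 0 := by
      unfold detG gradM
      rw [hd.fderiv]
      simp [Matrix.det_fin_three, ContinuousLinearMap.pi_apply, Pi.single_apply]
    exact ⟨hd.differentiableAt, by rw [hdet, abs_of_neg h], by rw [hdet]; linarith⟩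
  · have hd := hasFD_pos h
    have hdet : detG y19 x = x 0 := by
      unfold detG gradM
      rw [hd.fderiv]
      simp [Matrix.det_fin_three, ContinuousLinearMap.pi_apply, Pi.single_apply]
    exact ⟨hd.differentiableAt, by rw [hdet, abs_of_pos h], by rw [hdet]; linarith⟩

lemma x0_ne {x : V3} (h : x ∈ Ω19 \ P19) : x 0 ≠ 0 := by
  intro h0
  exact h.2 ⟨h0, h.1 1, h.1 2⟩

lemma y_comp (x : V3) : y19 x 0 = x 0 ∧ y19 x 1 = x 1 ∧ y19 x 2 = |x 0| * x 2 := by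
  refine ⟨rfl, rfl, rfl⟩

lemma image_eq : y19 '' Ω19 = V19plus ∪ S19 ∪ V19minus := by
  ext ξ
  constructor
  · rintro ⟨x, hx, rfl⟩
    have h0 := hx 0; have h1 := hx 1; have h2 := hx 2
    simp only [mem_Ioo] at h0 h1 h2
    rcases lt_trichotomy (x 0) 0 with h | h | h
    · right
      refine ⟨h0.1, h, h1.1, h1.2, ?_⟩
      show |(|x 0| * x 2)| < -(x 0)
      rw [abs_mul, abs_abs, abs_of_neg h]
      have h2' : |x 2| < 1 := abs_lt.2 ⟨h2.1, h2.2⟩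
      nlinarith [abs_nonneg (x 2)]
    · left; right
      refine ⟨h, h1, ?_⟩
      show |x 0| * x 2 = 0
      simp [h]
    · left; left
      refine ⟨h, h0.2, h1.1, h1.2, ?_⟩
      show |(|x 0| * x 2)| < x 0
      rw [abs_mul, abs_abs, abs_of_pos h]
      calc x 0 * |x 2| ≤ x 0 * |x 2| := le_rfl
        _ < x 0 := by
          have : |x 2| < 1 := abs_lt.2 ⟨h2.1, h2.2⟩
          nlinarith
  · rintro ((hp | hs) | hm)
    · obtain ⟨hp0, hp1, hp2, hp3, hp4⟩ := hp
      refine ⟨![ξ 0, ξ 1, ξ 2 / ξ 0], ?_, ?_⟩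
      · intro i
        fin_cases i <;> simp [mem_Ioo]
        · exact ⟨by linarith, hp1⟩
        · exact ⟨hp2, hp3⟩
        · rw [abs_lt] at hp4
          constructor
          · exact (lt_div_iff₀ hp0).2 (by linarith [hp4.1])
          · exact (div_lt_one hp0).2 hp4.2
      · funext i
        fin_cases i <;> simp [y19]
        rw [abs_of_pos hp0, mul_div_cancel₀ _ (ne_of_gt hp0)]
    · obtain ⟨hs0, hs1, hs2⟩ := hs
      refine ⟨![0, ξ 1, 0], ?_, ?_⟩
      · intro i
        fin_cases i <;> simp [mem_Ioo]
        · exact ⟨hs1.1, hs1.2⟩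
      · funext i
        fin_cases i
        · exact hs0.symm
        · rfl
        · show |(0:ℝ)| * 0 = ξ 2
          simpa using hs2.symm
    · obtain ⟨hm0, hm1, hm2, hm3, hm4⟩ := hm
      refine ⟨![ξ 0, ξ 1, ξ 2 / (-ξ 0)], ?_, ?_⟩
      · intro i
        fin_cases i <;> simp [mem_Ioo]
        · exact ⟨hm0, by linarith⟩
        · exact ⟨hm2, hm3⟩
        · rw [abs_lt] at hm4
          have hneg : (0:ℝ) < -ξ 0 := by linarith
          constructor
          · exact (lt_div_iff₀ hneg).2 (by linarith)
          · exact (div_lt_one hneg).2 (by linarith)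
      · funext i
        fin_cases i <;> simp [y19]
        rw [abs_of_neg hm1, mul_div_cancel₀ _ (show -ξ 0 ≠ 0 by linarith)]

lemma omega_pi : Ω19 = Set.pi univ (fun _ : Fin 3 => Ioo (-1 : ℝ) 1) := by
  ext x; simp [Ω19, Set.mem_pi]

lemma omega_open : IsOpen Ω19 := by
  rw [omega_pi]
  exact isOpen_set_pi finite_univ (fun i _ => isOpen_Ioo)

lemma frontier_omega : frontier Ω19 =
    {x : V3 | (∀ i, x i ∈ Icc (-1 : ℝ) 1) ∧ ¬ (∀ i, x i ∈ Ioo (-1 : ℝ) 1)} := by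
  have hcl : closure Ω19 = Set.pi univ (fun _ : Fin 3 => Icc (-1 : ℝ) 1) := by
    rw [omega_pi, closure_pi_set]
    exact Set.pi_congr rfl fun i _ => closure_Ioo (by norm_num : (-1:ℝ) ≠ 1)
  rw [frontier, omega_open.interior_eq, hcl]
  ext x
  rw [mem_diff, Set.mem_univ_pi]
  rfl

lemma V_open : IsOpen (V19plus ∪ V19minus) := by
  have h1 : IsOpen V19plus := by
    have : V19plus = {ξ : V3 | 0 < ξ 0} ∩ {ξ : V3 | ξ 0 < 1} ∩ {ξ : V3 | -1 < ξ 1}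
        ∩ {ξ : V3 | ξ 1 < 1} ∩ {ξ : V3 | |ξ 2| < ξ 0} := by
      ext ξ; simp [V19plus]; tauto
    rw [this]
    exact ((((isOpen_lt continuous_const (continuous_apply 0)).inter
      (isOpen_lt (continuous_apply 0) continuous_const)).inter
      (isOpen_lt continuous_const (continuous_apply 1))).inter
      (isOpen_lt (continuous_apply 1) continuous_const)).inter
      (isOpen_lt (continuous_abs.comp (continuous_apply 2)) (continuous_apply 0))
  have h2 : IsOpen V19minus := by
    have : V19minus = {ξ : V3 | -1 < ξ 0} ∩ {ξ : V3 | ξ 0 < 0} ∩ {ξ : V3 | -1 < ξ 1}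
        ∩ {ξ : V3 | ξ 1 < 1} ∩ {ξ : V3 | |ξ 2| < -ξ 0} := by
      ext ξ; simp [V19minus]; tauto
    rw [this]
    exact ((((isOpen_lt continuous_const (continuous_apply 0)).inter
      (isOpen_lt (continuous_apply 0) continuous_const)).inter
      (isOpen_lt continuous_const (continuous_apply 1))).inter
      (isOpen_lt (continuous_apply 1) continuous_const)).inter
      (isOpen_lt (continuous_abs.comp (continuous_apply 2))
        ((continuous_apply 0).neg))
  exact h1.union h2

lemma defconfig_eq : defConfig y19 Ω19 = V19plus ∪ V19minus := by
  have hS : S19 ⊆ y19 '' frontier Ω19 := by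
    rintro ξ ⟨hs0, hs1, hs2⟩
    refine ⟨![0, ξ 1, 1], ?_, ?_⟩
    · rw [frontier_omega]
      constructor
      · intro i
        fin_cases i <;> simp [mem_Icc]
        · exact ⟨hs1.1.le, hs1.2.le⟩
      · intro hcon
        have := (hcon 2).2
        simp at this
    · funext i
      fin_cases i
      · exact hs0.symm
      · rfl
      · show |(0:ℝ)| * 1 = ξ 2
        simpa using hs2.symm
  have hdisj : ∀ ξ ∈ V19plus ∪ V19minus, ξ ∉ y19 '' frontier Ω19 := by
    rintro ξ hξ ⟨x, hx, rfl⟩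
    rw [frontier_omega] at hx
    apply hx.2
    rcases hξ with hp | hm
    · obtain ⟨hp0, hp1, hp2, hp3, hp4⟩ := hp
      have e0 : y19 x 0 = x 0 := rfl
      have e2 : y19 x 2 = |x 0| * x 2 := rfl
      rw [e0] at hp0 hp1
      rw [e0, e2, abs_mul, abs_abs] at hp4
      have hx2 : |x 2| < 1 := by
        by_contra hcon
        push_neg at hcon
        rw [abs_of_pos hp0] at hp4
        nlinarith [mul_le_mul_of_nonneg_left hcon hp0.le]
      have hx1 : |x 1| < 1 := by
        have : y19 x 1 = x 1 := rfl
        rw [this] at hp2 hp3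
        exact abs_lt.2 ⟨hp2, hp3⟩
      intro i
      fin_cases i <;> simp [mem_Ioo]
      · exact ⟨by linarith, hp1⟩
      · exact abs_lt.1 hx1
      · exact abs_lt.1 hx2
    · obtain ⟨hm0, hm1, hm2, hm3, hm4⟩ := hm
      have e0 : y19 x 0 = x 0 := rfl
      have e2 : y19 x 2 = |x 0| * x 2 := rfl
      rw [e0] at hm0 hm1
      rw [e0, e2, abs_mul, abs_abs] at hm4
      have hx2 : |x 2| < 1 := by
        by_contra hcon
        push_neg at hcon
        rw [abs_of_neg hm1] at hm4
        nlinarith [mul_le_mul_of_nonneg_left hcon (show (0:ℝ) ≤ -x 0 by linarith)]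
      have hx1 : |x 1| < 1 := by
        have : y19 x 1 = x 1 := rfl
        rw [this] at hm2 hm3
        exact abs_lt.2 ⟨hm2, hm3⟩
      intro i
      fin_cases i <;> simp [mem_Ioo]
      · exact ⟨hm0, by linarith⟩
      · exact abs_lt.1 hx1
      · exact abs_lt.1 hx2
  unfold defConfig
  rw [image_eq]
  ext ξ
  constructor
  · rintro ⟨(hp | hs) | hm, hnb⟩
    · exact Or.inl hp
    · exact absurd (hS hs) hnb
    · exact Or.inr hm
  · intro hξ
    refine ⟨?_, hdisj ξ hξ⟩
    rcases hξ with hp | hm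
    · exact Or.inl (Or.inl hp)
    · exact Or.inr hm

lemma lip : LipschitzOnWith 2 y19 Ω19 := by
  rw [lipschitzOnWith_iff_dist_le_mul]
  intro a ha b hb
  have hc : ((2 : NNReal) : ℝ) = 2 := by norm_num
  rw [hc, dist_pi_le_iff (by positivity)]
  intro i
  have h0 := dist_le_pi_dist a b 0
  have h1 := dist_le_pi_dist a b 1
  have h2 := dist_le_pi_dist a b 2
  have hdn : (0:ℝ) ≤ dist a b := dist_nonneg
  fin_cases i
  · show dist (y19 a 0) (y19 b 0) ≤ _
    have : dist (y19 a 0) (y19 b 0) = dist (a 0) (b 0) := rfl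
    rw [this]; linarith
  · show dist (y19 a 1) (y19 b 1) ≤ _
    have : dist (y19 a 1) (y19 b 1) = dist (a 1) (b 1) := rfl
    rw [this]; linarith
  · show dist (y19 a 2) (y19 b 2) ≤ _
    have ha0 : |a 0| ≤ 1 := abs_le.2 ⟨(ha 0).1.le, (ha 0).2.le⟩
    have hb2 : |b 2| ≤ 1 := abs_le.2 ⟨(hb 2).1.le, (hb 2).2.le⟩
    have e : dist (y19 a 2) (y19 b 2) = |(|a 0| * a 2 - |b 0| * b 2)| := Real.dist_eq _ _
    have key : |a 0| * a 2 - |b 0| * b 2 = |a 0| * (a 2 - b 2) + (|a 0| - |b 0|) * b 2 := by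
      ring
    have t2 : |a 2 - b 2| ≤ dist a b := by rw [← Real.dist_eq]; exact h2
    have t0 : |(|a 0| - |b 0|)| ≤ dist a b :=
      (abs_abs_sub_abs_le_abs_sub _ _).trans (by rw [← Real.dist_eq]; exact h0)
    rw [e, key]
    calc |(|a 0|) * (a 2 - b 2) + (|a 0| - |b 0|) * b 2|
        ≤ |(|a 0|) * (a 2 - b 2)| + |(|a 0| - |b 0|) * b 2| := abs_add_le _ _
      _ = |a 0| * |a 2 - b 2| + |(|a 0| - |b 0|)| * |b 2| := by
          rw [abs_mul, abs_mul, abs_abs]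
      _ ≤ 1 * dist a b + dist a b * 1 := by
          have g1 : |a 0| * |a 2 - b 2| ≤ 1 * dist a b :=
            mul_le_mul ha0 t2 (abs_nonneg _) zero_le_one
          have g2 : |(|a 0| - |b 0|)| * |b 2| ≤ dist a b * 1 :=
            mul_le_mul t0 hb2 (abs_nonneg _) hdn
          linarith
      _ = 2 * dist a b := by ring

lemma inj : Set.InjOn y19 (Ω19 \ P19) := by
  intro a ha b hb hab
  have h0 : a 0 = b 0 := congrFun hab 0
  have h1 : a 1 = b 1 := congrFun hab 1
  have h2 : |a 0| * a 2 = |b 0| * b 2 := congrFun hab 2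
  have hne := x0_ne ha
  funext i
  fin_cases i
  · exact h0
  · exact h1
  · rw [h0] at h2
    have : |b 0| ≠ 0 := abs_ne_zero.2 (h0 ▸ hne)
    exact mul_left_cancel₀ this h2

lemma not_open : ¬ IsOpen (y19 '' Ω19) := by
  rw [image_eq]
  intro hopen
  rw [Metric.isOpen_iff] at hopen
  have hmem : (fun _ => 0 : V3) ∈ V19plus ∪ S19 ∪ V19minus := by
    left; right
    exact ⟨rfl, by norm_num, rfl⟩
  obtain ⟨ε, hε, hball⟩ := hopen _ hmem
  set q : V3 := ![0, 0, min (ε/2) (1/2)] with hq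
  have hqpos : 0 < min (ε/2) (1/2) := by positivity
  have hqmem : q ∈ Metric.ball (fun _ => 0 : V3) ε := by
    rw [Metric.mem_ball, dist_pi_lt_iff hε]
    intro i
    fin_cases i <;> simp [hq, Real.dist_eq]
    all_goals (first | exact hε | skip)
    rw [abs_of_nonneg (by positivity : (0:ℝ) ≤ ε / 2 ⊓ 2⁻¹)]
    calc ε / 2 ⊓ 2⁻¹ ≤ ε / 2 := min_le_left _ _
      _ < ε := by linarith
  have := hball hqmem
  have hq0 : q 0 = 0 := rfl
  have hq2 : q 2 = min (ε/2) (1/2) := rfl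
  rcases this with (hp | hs) | hm
  · have h' : (0:ℝ) < q 0 := hp.1
    rw [hq0] at h'; exact lt_irrefl 0 h'
  · have h' : q 2 = 0 := hs.2.2
    rw [hq2] at h'; exact hqpos.ne' h'
  · have h' : q 0 < 0 := hm.2.1
    rw [hq0] at h'; exact lt_irrefl 0 h' 

lemma not_conn : ¬ IsConnected (V19plus ∪ V19minus) := by
  rintro ⟨-, hpc⟩
  have hu : IsOpen {ξ : V3 | 0 < ξ 0} := isOpen_lt continuous_const (continuous_apply 0)
  have hv : IsOpen {ξ : V3 | ξ 0 < 0} := isOpen_lt (continuous_apply 0) continuous_const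
  have hsub : V19plus ∪ V19minus ⊆ {ξ : V3 | 0 < ξ 0} ∪ {ξ : V3 | ξ 0 < 0} := by
    rintro ξ (hp | hm)
    · exact Or.inl hp.1
    · exact Or.inr hm.2.1
  have hpmem : (![1/2, 0, 0] : V3) ∈ (V19plus ∪ V19minus) ∩ {ξ : V3 | 0 < ξ 0} := by
    constructor
    · left
      refine ⟨by norm_num, by norm_num, by norm_num, by norm_num, ?_⟩
      show |(![1/2, 0, 0] : V3) 2| < _
      norm_num [Matrix.cons_val_two]
    · show (0:ℝ) < 1/2; norm_num
  have hmmem : (![-(1/2), 0, 0] : V3) ∈ (V19plus ∪ V19minus) ∩ {ξ : V3 | ξ 0 < 0} := by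
    constructor
    · right
      refine ⟨by norm_num, by norm_num, by norm_num, by norm_num, ?_⟩
      show |(![-(1/2), 0, 0] : V3) 2| < _
      norm_num [Matrix.cons_val_two]
    · show (-(1/2):ℝ) < 0; norm_num
  obtain ⟨z, hz, hz1, hz2⟩ := hpc _ _ hu hv hsub ⟨_, hpmem⟩ ⟨_, hmmem⟩
  have h1 : 0 < z 0 := hz1
  have h2 : z 0 < 0 := hz2
  linarith


end BallAux

/-- Ball's example.
For `Ω = (−1,1)³`, `P = {0}×(−1,1)²` and `y(x) = (x₁,x₂,|x₁|x₃)`: `y ∈ W^{1,∞}(Ω;ℝ³)`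
(Lipschitz), `det ∇y = |x₁| > 0` on `Ω \ P`, `y` is injective on `Ω \ P`,
`y(Ω) = V⁺ ∪ S ∪ V⁻` is not open, and `Ω^y = y(Ω) \ y(∂Ω) = V⁺ ∪ V⁻` is open and
disconnected. -/
theorem ball_example :
    (∃ Kl : NNReal, LipschitzOnWith Kl y19 Ω19) ∧
    (∀ x ∈ Ω19 \ P19, DifferentiableAt ℝ y19 x ∧ detG y19 x = |x 0| ∧ 0 < detG y19 x) ∧
    Set.InjOn y19 (Ω19 \ P19) ∧
    y19 '' Ω19 = V19plus ∪ S19 ∪ V19minus ∧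
    ¬ IsOpen (y19 '' Ω19) ∧
    defConfig y19 Ω19 = V19plus ∪ V19minus ∧
    IsOpen (V19plus ∪ V19minus) ∧
    ¬ IsConnected (V19plus ∪ V19minus) := by
  refine ⟨⟨2, BallAux.lip⟩, ?_, BallAux.inj, BallAux.image_eq, BallAux.not_open,
    BallAux.defconfig_eq, BallAux.V_open, BallAux.not_conn⟩
  intro x hx
  exact BallAux.diff_det (BallAux.x0_ne hx)
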